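/- Let m and k be integers with 2 ≤ k ≤ m, and let a : Fin m → ℤ satisfy Σ_j a j ≥ 0. Set A = Σ_j |a j| and T = Σ_j a j, and construct a two-machine instance as follows. Machine 1 contains: for each index j with a j ≥ 0, one job of processing time m·(a j) + 1 (a 'k-sum job' of machine 1); k − 1 jobs each of processing time 3·m·A; and one job of processing time 3·m·A + 1. Machine 2 contains: for each index j with a j < 0, one job of processing time −m·(a j) (a 'k-sum job' of machine 2); and one job of processing time m·(T + 3·k·A). Let L₁ and L₂ denote the total processing time of the jobs on machine 1 and machine 2, respectively. Then there exist a set U₁ of jobs on machine 1 and a set U₂ of jobs on machine 2 with |U₁| + |U₂| = k and 0 < p(U₁) − p(U₂) < L₁ − L₂ (where p(U) denotes the total processing time of the jobs in U) if and only if there exists a subset Γ ⊆ Fin m with |Γ| = k and Σ_{j∈Γ} a j = 0. -/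

import Mathlib

/-- Jobs on machine 1: a k-sum job for each `j` with `a j ≥ 0`, plus `k - 1` filler
jobs, plus one extra job. -/
abbrev KSJob1 (m k : ℕ) (a : Fin m → ℤ) :=
  {j : Fin m // 0 ≤ a j} ⊕ (Fin (k - 1) ⊕ Unit)

/-- Jobs on machine 2: a k-sum job for each `j` with `a j < 0`, plus one big job. -/
abbrev KSJob2 (m : ℕ) (a : Fin m → ℤ) :=
  {j : Fin m // a j < 0} ⊕ Unit

/-- Processing times of the jobs on machine 1. -/
def ksp1 (m k : ℕ) (a : Fin m → ℤ) : KSJob1 m k a → ℤ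
  | Sum.inl j => m * a j.1 + 1
  | Sum.inr (Sum.inl _) => 3 * m * ∑ j, |a j|
  | Sum.inr (Sum.inr _) => 3 * m * ∑ j, |a j| + 1

/-- Processing times of the jobs on machine 2. -/
def ksp2 (m k : ℕ) (a : Fin m → ℤ) : KSJob2 m a → ℤ
  | Sum.inl j => -(m * a j.1)
  | Sum.inr _ => m * ((∑ j, a j) + 3 * k * ∑ j, |a j|)

open Finset

private lemma sum_toParts {α β : Type*} (u : Finset (α ⊕ β)) (f : α ⊕ β → ℤ) :
    ∑ x ∈ u, f x = (∑ x ∈ u.toLeft, f (Sum.inl x)) + ∑ x ∈ u.toRight, f (Sum.inr x) := by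
  conv_lhs => rw [← u.toLeft_disjSum_toRight]
  rw [Finset.sum_disjSum]

private lemma sum_subtype_val {m : ℕ} (p : Fin m → Prop) [DecidablePred p] (f : Fin m → ℤ) :
    ∑ x : {j : Fin m // p j}, f x.1 = ∑ j ∈ univ.filter p, f j :=
  (Finset.sum_subtype _ (fun x => by simp) f).symm

private lemma sum_subtype_filter {m : ℕ} (p : Fin m → Prop) [DecidablePred p]
    (s : Finset (Fin m)) (f : Fin m → ℤ) :
    ∑ x ∈ s.subtype p, f x.1 = ∑ j ∈ s.filter p, f j :=
  Finset.sum_subtype_eq_sum_filter f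

set_option maxHeartbeats 1000000 in
theorem ksum_reduction (m k : ℕ) (hk : 2 ≤ k) (hkm : k ≤ m)
    (a : Fin m → ℤ) (ha : 0 ≤ ∑ j, a j) :
    (∃ (U₁ : Finset (KSJob1 m k a)) (U₂ : Finset (KSJob2 m a)),
        U₁.card + U₂.card = k ∧
        0 < (∑ x ∈ U₁, ksp1 m k a x) - (∑ x ∈ U₂, ksp2 m k a x) ∧
        (∑ x ∈ U₁, ksp1 m k a x) - (∑ x ∈ U₂, ksp2 m k a x) <
          (∑ x, ksp1 m k a x) - (∑ x, ksp2 m k a x)) ↔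
      ∃ Γ : Finset (Fin m), Γ.card = k ∧ ∑ j ∈ Γ, a j = 0 := by
  obtain ⟨A, hAe⟩ : ∃ A : ℤ, (∑ j, |a j|) = A := ⟨_, rfl⟩
  obtain ⟨T, hTe⟩ : ∃ T : ℤ, (∑ j, a j) = T := ⟨_, rfl⟩
  obtain ⟨P, hPe⟩ : ∃ P : ℤ, (∑ j ∈ univ.filter (fun j => 0 ≤ a j), a j) = P := ⟨_, rfl⟩
  obtain ⟨Q, hQe⟩ : ∃ Q : ℤ, (∑ j ∈ univ.filter (fun j => a j < 0), a j) = Q := ⟨_, rfl⟩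
  have hT0 : 0 ≤ T := hTe ▸ ha
  have hm0 : (0 : ℤ) ≤ m := Nat.cast_nonneg m
  have hM2 : (2 : ℤ) ≤ m := by exact_mod_cast le_trans hk hkm
  have hkM : (k : ℤ) ≤ m := by exact_mod_cast hkm
  have hk2 : (2 : ℤ) ≤ k := by exact_mod_cast hk
  have hfe : univ.filter (fun j : Fin m => ¬ 0 ≤ a j) = univ.filter (fun j => a j < 0) :=
    Finset.filter_congr (fun j _ => by rw [not_le])
  have hPQ : P + Q = T := by
    rw [← hPe, ← hQe, ← hfe, Finset.sum_filter_add_sum_filter_not, hTe]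
  have h1abs : ∑ j ∈ univ.filter (fun j : Fin m => 0 ≤ a j), |a j| = P := by
    rw [← hPe]
    exact Finset.sum_congr rfl (fun j hj => abs_of_nonneg (mem_filter.mp hj).2)
  have h2abs : ∑ j ∈ univ.filter (fun j : Fin m => a j < 0), |a j| = -Q := by
    rw [← hQe, ← Finset.sum_neg_distrib]
    exact Finset.sum_congr rfl (fun j hj => abs_of_neg (mem_filter.mp hj).2)
  have hA : A = P - Q := by
    rw [← hAe, ← Finset.sum_filter_add_sum_filter_not univ (fun j => 0 ≤ a j) (fun j => |a j|),
      hfe, h1abs, h2abs]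
    ring
  have hP0 : 0 ≤ P := by
    rw [← hPe]; exact Finset.sum_nonneg (fun j hj => (mem_filter.mp hj).2)
  have hQ0 : Q ≤ 0 := by
    rw [← hQe]; exact Finset.sum_nonpos (fun j hj => le_of_lt (mem_filter.mp hj).2)
  set nn : ℕ := (univ.filter (fun j : Fin m => 0 ≤ a j)).card with hnn
  have hnm : (nn : ℤ) ≤ m := by
    have : nn ≤ m := le_trans (card_filter_le _ _) (by simp)
    exact_mod_cast this
  have hcard1 : Fintype.card {j : Fin m // 0 ≤ a j} = nn := Fintype.card_subtype _
  have hPsub : (∑ x : {j : Fin m // 0 ≤ a j}, a x.1) = P := by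
    rw [sum_subtype_val (fun j => 0 ≤ a j) a, hPe]
  have hQsub : (∑ x : {j : Fin m // a j < 0}, a x.1) = Q := by
    rw [sum_subtype_val (fun j => a j < 0) a, hQe]
  -- total loads
  have hL1 : (∑ x, ksp1 m k a x) = m * P + nn + ((k : ℤ) - 1) * (3 * m * A) + (3 * m * A + 1) := by
    rw [Fintype.sum_sum_type]
    have h1 : (∑ x : {j : Fin m // 0 ≤ a j}, ksp1 m k a (Sum.inl x)) = m * P + nn := by
      show (∑ x : {j : Fin m // 0 ≤ a j}, ((m : ℤ) * a x.1 + 1)) = m * P + nn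
      rw [Finset.sum_add_distrib, ← Finset.mul_sum, hPsub, Finset.sum_const, card_univ, hcard1]
      push_cast
      ring
    have h2 : (∑ x : Fin (k - 1) ⊕ Unit, ksp1 m k a (Sum.inr x))
        = ((k : ℤ) - 1) * (3 * m * A) + (3 * m * A + 1) := by
      rw [Fintype.sum_sum_type]
      show (∑ _x : Fin (k - 1), (3 * (m : ℤ) * ∑ j, |a j|))
          + (∑ _x : Unit, (3 * (m : ℤ) * (∑ j, |a j|) + 1)) = _
      rw [hAe, Finset.sum_const, Finset.sum_const]
      simp only [card_univ, Fintype.card_fin, Fintype.card_unit, one_smul, nsmul_eq_mul]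
      congr 1
      rw [Nat.cast_sub (by omega)]
      norm_num
    rw [h1, h2]
    ring
  have hL2 : (∑ x, ksp2 m k a x) = -(m * Q) + m * (T + 3 * k * A) := by
    rw [Fintype.sum_sum_type]
    have h1 : (∑ x : {j : Fin m // a j < 0}, ksp2 m k a (Sum.inl x)) = -(m * Q) := by
      show (∑ x : {j : Fin m // a j < 0}, (-((m : ℤ) * a x.1))) = -(m * Q)
      rw [Finset.sum_neg_distrib, ← Finset.mul_sum, hQsub]
    have h2 : (∑ x : Unit, ksp2 m k a (Sum.inr x)) = m * (T + 3 * k * A) := by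
      show (∑ _x : Unit, ((m : ℤ) * ((∑ j, a j) + 3 * (k : ℤ) * ∑ j, |a j|))) = _
      rw [hTe, hAe, Finset.sum_const]
      simp
    rw [h1, h2]
  have hLdiff : (∑ x, ksp1 m k a x) - (∑ x, ksp2 m k a x) = (nn : ℤ) + 1 := by
    rw [hL1, hL2]
    linear_combination (m : ℤ) * hPQ
  constructor
  · -- hard direction
    rintro ⟨U₁, U₂, hcard, hpos, hlt⟩
    rw [hLdiff] at hlt
    by_cases hA0 : A = 0
    · -- degenerate case: all values are zero
      have hall : ∀ j, a j = 0 := by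
        intro j
        have h := (Finset.sum_eq_zero_iff_of_nonneg (fun i _ => abs_nonneg (a i))).mp
          (show (∑ i, |a i|) = 0 by rw [hAe, hA0]) j (mem_univ j)
        exact abs_eq_zero.mp h
      obtain ⟨Γ, -, hΓc⟩ :=
        Finset.exists_subset_card_eq (show k ≤ (univ : Finset (Fin m)).card by simpa)
      exact ⟨Γ, hΓc, Finset.sum_eq_zero (fun j _ => hall j)⟩
    have hA1 : 1 ≤ A := by
      have h0 : 0 ≤ A := by linarith
      omega
    have h3mA0 : (0 : ℤ) ≤ 3 * m * A := by positivity
    have hmA : (m : ℤ) ≤ m * A := by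
      have := mul_le_mul_of_nonneg_left hA1 hm0
      linarith
    obtain ⟨x, hxe⟩ : ∃ x : ℤ, (∑ j ∈ U₁.toLeft, a j.1) = x := ⟨_, rfl⟩
    obtain ⟨y, hye⟩ : ∃ y : ℤ, (∑ j ∈ U₂.toLeft, a j.1) = y := ⟨_, rfl⟩
    have hsum1 : (∑ z ∈ U₁, ksp1 m k a z)
        = m * x + U₁.toLeft.card + (U₁.toRight.toLeft.card : ℤ) * (3 * m * A)
          + (U₁.toRight.toRight.card : ℤ) * (3 * m * A + 1) := by
      rw [sum_toParts U₁ (ksp1 m k a), sum_toParts U₁.toRight (fun z => ksp1 m k a (Sum.inr z))]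
      show (∑ j ∈ U₁.toLeft, ((m : ℤ) * a j.1 + 1))
          + ((∑ _j ∈ U₁.toRight.toLeft, (3 * (m : ℤ) * ∑ j, |a j|))
            + (∑ _j ∈ U₁.toRight.toRight, (3 * (m : ℤ) * (∑ j, |a j|) + 1))) = _
      rw [hAe, Finset.sum_add_distrib, ← Finset.mul_sum, hxe, Finset.sum_const, Finset.sum_const,
        Finset.sum_const]
      push_cast
      ring
    have hsum2 : (∑ z ∈ U₂, ksp2 m k a z)
        = -(m * y) + (U₂.toRight.card : ℤ) * (m * (T + 3 * k * A)) := by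
      rw [sum_toParts U₂ (ksp2 m k a)]
      show (∑ j ∈ U₂.toLeft, (-((m : ℤ) * a j.1)))
          + (∑ _j ∈ U₂.toRight, ((m : ℤ) * ((∑ j, a j) + 3 * (k : ℤ) * ∑ j, |a j|))) = _
      rw [hTe, hAe, Finset.sum_neg_distrib, ← Finset.mul_sum, hye, Finset.sum_const]
      push_cast
      ring
    rw [hsum1, hsum2] at hpos hlt
    -- cardinalities
    have hcards : U₁.toLeft.card + (U₁.toRight.toLeft.card + U₁.toRight.toRight.card)
        + (U₂.toLeft.card + U₂.toRight.card) = k := by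
      rw [Finset.card_toLeft_add_card_toRight, Finset.card_toLeft_add_card_toRight,
        Finset.card_toLeft_add_card_toRight]
      exact hcard
    have hE1 : U₁.toRight.toRight.card ≤ 1 :=
      le_trans (Finset.card_le_univ _) (le_of_eq Fintype.card_unit)
    have hB1 : U₂.toRight.card ≤ 1 :=
      le_trans (Finset.card_le_univ _) (le_of_eq Fintype.card_unit)
    have hVn : (U₁.toLeft.card : ℤ) ≤ nn := by
      have := le_trans (Finset.card_le_univ U₁.toLeft) (le_of_eq hcard1)
      exact_mod_cast this
    -- bounds on x and y
    have hx0 : 0 ≤ x := by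
      rw [← hxe]; exact Finset.sum_nonneg (fun j _ => j.2)
    have hxP : x ≤ P := by
      have h := Finset.sum_le_sum_of_subset_of_nonneg (Finset.subset_univ U₁.toLeft)
        (fun (j : {j : Fin m // 0 ≤ a j}) _ _ => j.2)
      rw [hxe] at h
      calc x ≤ ∑ j : {j : Fin m // 0 ≤ a j}, a j.1 := h
      _ = P := hPsub
    have hy0 : y ≤ 0 := by
      rw [← hye]; exact Finset.sum_nonpos (fun j _ => le_of_lt j.2)
    have hyQ : Q ≤ y := by
      have h1 : (∑ j ∈ U₂.toLeft, (-(a j.1))) ≤ ∑ j : {j : Fin m // a j < 0}, (-(a j.1)) :=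
        Finset.sum_le_sum_of_subset_of_nonneg (Finset.subset_univ U₂.toLeft)
          (fun j _ _ => by have := j.2; linarith)
      have h2 : (∑ j : {j : Fin m // a j < 0}, (-(a j.1))) = -Q := by
        rw [Finset.sum_neg_distrib, hQsub]
      have h3 : (∑ j ∈ U₂.toLeft, (-(a j.1))) = -y := by
        rw [Finset.sum_neg_distrib, hye]
      linarith
    -- product bounds
    have hmx : (m : ℤ) * x ≤ m * A := mul_le_mul_of_nonneg_left (by linarith) hm0
    have hmy : -((m : ℤ) * A) ≤ m * y := by
      have h1 : -A ≤ y := by linarith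
      have := mul_le_mul_of_nonneg_left h1 hm0
      linarith
    have hmy0 : (m : ℤ) * y ≤ 0 := mul_nonpos_of_nonneg_of_nonpos hm0 hy0
    have hmx0 : (0 : ℤ) ≤ m * x := mul_nonneg hm0 hx0
    have hmT : (0 : ℤ) ≤ m * T := mul_nonneg hm0 hT0
    have hb01 : U₂.toRight.card = 0 ∨ U₂.toRight.card = 1 := by omega
    rcases hb01 with hb | hb
    · -- no big job
      rw [hb] at hpos hlt
      push_cast [Nat.cast_zero] at hpos hlt
      by_cases hfe0 : U₁.toRight.toLeft.card + U₁.toRight.toRight.card = 0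
      · -- only k-sum jobs swapped
        have hF0 : U₁.toRight.toLeft.card = 0 := by omega
        have hE0 : U₁.toRight.toRight.card = 0 := by omega
        rw [hF0, hE0] at hpos hlt
        push_cast [Nat.cast_zero] at hpos hlt
        have hks : U₁.toLeft.card + U₂.toLeft.card = k := by omega
        have hσ : x + y = 0 := by
          rcases lt_trichotomy (x + y) 0 with h | h | h
          · exfalso
            have h1 : x + y ≤ -1 := by omega
            have h2 : (m : ℤ) * (x + y) ≤ m * (-1) := mul_le_mul_of_nonneg_left h1 hm0
            have hVk : (U₁.toLeft.card : ℤ) ≤ k := by exact_mod_cast le_trans (Nat.le_add_right _ _) hks.le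
            linarith [hpos, h2, hVk, hkM]
          · exact h
          · exfalso
            have h1 : 1 ≤ x + y := by omega
            rcases Nat.eq_zero_or_pos U₁.toLeft.card with hV0 | hV1
            · have hVe : U₁.toLeft = ∅ := Finset.card_eq_zero.mp hV0
              have : x = 0 := by rw [← hxe, hVe]; simp
              omega
            · have h2 : (m : ℤ) * 1 ≤ m * (x + y) := mul_le_mul_of_nonneg_left h1 hm0
              have hV1' : (1 : ℤ) ≤ U₁.toLeft.card := by exact_mod_cast hV1
              linarith [hlt, h2, hnm, hVn]
        -- construct the k-sum set
        have hdisj : Disjoint (U₁.toLeft.image Subtype.val) (U₂.toLeft.image Subtype.val) := by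
          rw [Finset.disjoint_left]
          rintro j hj1 hj2
          obtain ⟨j1, -, rfl⟩ := Finset.mem_image.mp hj1
          obtain ⟨j2, -, hj⟩ := Finset.mem_image.mp hj2
          exact absurd (hj ▸ j2.2) (not_lt.mpr j1.2)
        refine ⟨U₁.toLeft.image Subtype.val ∪ U₂.toLeft.image Subtype.val, ?_, ?_⟩
        · rw [Finset.card_union_of_disjoint hdisj,
            Finset.card_image_of_injective _ Subtype.val_injective,
            Finset.card_image_of_injective _ Subtype.val_injective]
          exact hks
        · rw [Finset.sum_union hdisj,
            Finset.sum_image (fun x _ y _ h => Subtype.val_injective h),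
            Finset.sum_image (fun x _ y _ h => Subtype.val_injective h), hxe, hye]
          exact hσ
      · -- a filler or the extra job is swapped: contradiction
        exfalso
        have hfe1 : (1 : ℤ) ≤ (U₁.toRight.toLeft.card : ℤ) + U₁.toRight.toRight.card := by
          have : 1 ≤ U₁.toRight.toLeft.card + U₁.toRight.toRight.card := by omega
          exact_mod_cast this
        have h3 : 1 * (3 * (m : ℤ) * A)
            ≤ ((U₁.toRight.toLeft.card : ℤ) + U₁.toRight.toRight.card) * (3 * m * A) :=
          mul_le_mul_of_nonneg_right hfe1 h3mA0
        have hE0' : (0 : ℤ) ≤ U₁.toRight.toRight.card := Nat.cast_nonneg _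
        have hV0' : (0 : ℤ) ≤ U₁.toLeft.card := Nat.cast_nonneg _
        linarith [hlt, h3, hmx0, hmy, hE0', hV0', hnm, hM2, hmA]
    · -- big job swapped: contradiction
      exfalso
      rw [hb] at hpos hlt
      push_cast [Nat.cast_one] at hpos hlt
      have hfek : (U₁.toRight.toLeft.card : ℤ) + U₁.toRight.toRight.card ≤ (k : ℤ) - 1 := by
        have : U₁.toRight.toLeft.card + U₁.toRight.toRight.card ≤ k - 1 := by omega
        have h' : ((U₁.toRight.toLeft.card + U₁.toRight.toRight.card : ℕ) : ℤ) ≤ ((k - 1 : ℕ) : ℤ) := by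
          exact_mod_cast this
        rw [Nat.cast_sub (by omega)] at h'
        push_cast at h' ⊢
        linarith
      have hVE : (U₁.toLeft.card : ℤ) + U₁.toRight.toRight.card ≤ k := by
        have : U₁.toLeft.card + U₁.toRight.toRight.card ≤ k := by omega
        exact_mod_cast this
      have h3 : ((U₁.toRight.toLeft.card : ℤ) + U₁.toRight.toRight.card) * (3 * m * A)
          ≤ ((k : ℤ) - 1) * (3 * m * A) := mul_le_mul_of_nonneg_right hfek h3mA0
      linarith [hpos, hmx, hmy0, hmT, h3, hVE, hkM, hmA]
  · -- easy direction
    rintro ⟨Γ, hΓc, hΓs⟩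
    obtain ⟨X, hXe⟩ : ∃ X : ℤ, (∑ j ∈ Γ.filter (fun j => 0 ≤ a j), a j) = X := ⟨_, rfl⟩
    obtain ⟨Y, hYe⟩ : ∃ Y : ℤ, (∑ j ∈ Γ.filter (fun j => a j < 0), a j) = Y := ⟨_, rfl⟩
    have hfeΓ : Γ.filter (fun j => ¬ 0 ≤ a j) = Γ.filter (fun j => a j < 0) :=
      Finset.filter_congr (fun j _ => by rw [not_le])
    have hXY : X + Y = 0 := by
      rw [← hXe, ← hYe, ← hfeΓ, Finset.sum_filter_add_sum_filter_not, hΓs]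
    have hcardXY : (Γ.filter (fun j => 0 ≤ a j)).card + (Γ.filter (fun j => a j < 0)).card = k := by
      rw [← hfeΓ, Finset.card_filter_add_card_filter_not, hΓc]
    refine ⟨(Γ.subtype (fun j => 0 ≤ a j)).map ⟨Sum.inl, Sum.inl_injective⟩,
      (Γ.subtype (fun j => a j < 0)).map ⟨Sum.inl, Sum.inl_injective⟩, ?_, ?_⟩
    · rw [Finset.card_map, Finset.card_map, Finset.card_subtype, Finset.card_subtype]
      exact hcardXY
    · have hs1 : (∑ z ∈ (Γ.subtype (fun j => 0 ≤ a j)).map ⟨Sum.inl, Sum.inl_injective⟩,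
          ksp1 m k a z) = m * X + ((Γ.filter (fun j => 0 ≤ a j)).card : ℤ) := by
        rw [Finset.sum_map]
        show (∑ j ∈ Γ.subtype (fun j => 0 ≤ a j), ((m : ℤ) * a j.1 + 1)) = _
        rw [sum_subtype_filter (fun j => 0 ≤ a j) Γ (fun j => (m : ℤ) * a j + 1),
          Finset.sum_add_distrib, ← Finset.mul_sum, hXe, Finset.sum_const]
        push_cast
        ring
      have hs2 : (∑ z ∈ (Γ.subtype (fun j => a j < 0)).map ⟨Sum.inl, Sum.inl_injective⟩,
          ksp2 m k a z) = -(m * Y) := by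
        rw [Finset.sum_map]
        show (∑ j ∈ Γ.subtype (fun j => a j < 0), (-((m : ℤ) * a j.1))) = _
        rw [sum_subtype_filter (fun j => a j < 0) Γ (fun j => -((m : ℤ) * a j)),
          Finset.sum_neg_distrib, ← Finset.mul_sum, hYe]
      rw [hs1, hs2, hLdiff]
      have hD : (m : ℤ) * X + ((Γ.filter (fun j => 0 ≤ a j)).card : ℤ) - -(m * Y)
          = ((Γ.filter (fun j => 0 ≤ a j)).card : ℤ) := by
        linear_combination (m : ℤ) * hXY
      rw [hD]
      constructor
      · have hne : (Γ.filter (fun j => 0 ≤ a j)).Nonempty := by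
          by_contra hne
          rw [Finset.not_nonempty_iff_eq_empty] at hne
          have hX0 : X = 0 := by rw [← hXe, hne]; simp
          have hY0 : Y = 0 := by omega
          have h0 : (Γ.filter (fun j => 0 ≤ a j)).card = 0 := by rw [hne]; rfl
          have hΓnne : (Γ.filter (fun j => a j < 0)).Nonempty := by
            apply Finset.card_pos.mp
            omega
          have : Y < 0 := by
            rw [← hYe]
            exact Finset.sum_neg (fun j hj => (mem_filter.mp hj).2) hΓnne
          omega
        have := Finset.card_pos.mpr hne
        exact_mod_cast this
      · have hsub : Γ.filter (fun j => 0 ≤ a j) ⊆ univ.filter (fun j => 0 ≤ a j) :=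
          Finset.filter_subset_filter _ (Finset.subset_univ Γ)
        have h := Finset.card_le_card hsub
        have h' : ((Γ.filter (fun j => 0 ≤ a j)).card : ℤ) ≤ nn := by exact_mod_cast h
        linarith
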